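/- Let N = 2^p. For every nonzero frequency k, the one-dimensional Fourier vector φ_k and every Haar wavelet h^1_{n,ℓ} satisfy |⟨φ_k, h^1_{n,ℓ}⟩| ≤ 3√(2π)/√|k|. -/

import Mathlib

open Complex Real Finset

noncomputable def haarBlock (p n ℓ e t : ℕ) : ℂ :=
  if ℓ * 2 ^ (p - n) ≤ t ∧ t < ℓ * 2 ^ (p - n) + 2 ^ (p - n - 1) then
    (((2 : ℝ) ^ (((n : ℝ) - p) / 2) : ℝ) : ℂ)
  else if ℓ * 2 ^ (p - n) + 2 ^ (p - n - 1) ≤ t ∧ t < (ℓ + 1) * 2 ^ (p - n) then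
    (-1 : ℂ) ^ e * (((2 : ℝ) ^ (((n : ℝ) - p) / 2) : ℝ) : ℂ)
  else 0

noncomputable def fourierVec (p : ℕ) (k : ℤ) (t : ℕ) : ℂ :=
  ((1 / Real.sqrt (2 ^ p) : ℝ) : ℂ) *
    Complex.exp (2 * π * Complex.I * t * k / 2 ^ p)

set_option maxHeartbeats 1000000

lemma abs_exp_I_sub_one (θ : ℝ) :
    ‖Complex.exp (θ * Complex.I) - 1‖ = 2 * |Real.sin (θ / 2)| := by
  have e2 : Complex.exp (θ * Complex.I)
      = Complex.exp ((θ/2 : ℝ) * Complex.I) * Complex.exp ((θ/2 : ℝ) * Complex.I) := by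
    rw [← Complex.exp_add]; congr 1; push_cast; ring
  have e1 : Complex.exp (-(((θ/2 : ℝ) : ℂ) * Complex.I)) * Complex.exp ((θ/2 : ℝ) * Complex.I) = 1 := by
    rw [← Complex.exp_add]; simp
  have key : Complex.exp (θ * Complex.I) - 1
      = Complex.exp ((θ/2 : ℝ) * Complex.I) * (2 * Complex.I * Complex.sin ((θ/2 : ℝ))) := by
    rw [Complex.sin, neg_mul]
    rw [e2]
    have hI : (Complex.I : ℂ)^2 = -1 := Complex.I_sq
    linear_combination e1 - Complex.exp ((θ/2 : ℝ) * Complex.I) *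
      (Complex.exp (-(((θ/2 : ℝ) : ℂ) * Complex.I)) - Complex.exp ((θ/2 : ℝ) * Complex.I)) * hI
  rw [key, norm_mul, Complex.norm_exp_ofReal_mul_I, one_mul, norm_mul, norm_mul,
    Complex.norm_two, Complex.norm_I, mul_one, ← Complex.ofReal_sin, Complex.norm_real, Real.norm_eq_abs]

set_option maxHeartbeats 1000000

/-- For every nonzero frequency `k`, the Fourier vector `φ_k` and every Haar
wavelet `h^1_{n,ℓ}` satisfy `|⟨φ_k, h^1_{n,ℓ}⟩| ≤ 3√(2π)/√|k|`. -/
theorem stmt_5 (p n ℓ : ℕ) (hn : n < p) (hℓ : ℓ < 2 ^ n)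
    (k : ℤ) (hk : k ≠ 0) (hk1 : -(2 ^ p : ℤ) / 2 + 1 ≤ k) (hk2 : k ≤ 2 ^ p / 2) :
    ‖(∑ t ∈ Finset.range (2 ^ p),
        (starRingEnd ℂ) (fourierVec p k t) * haarBlock p n ℓ 1 t)‖ ≤
      3 * Real.sqrt (2 * π) / Real.sqrt |(k : ℝ)| := by
  have hp1 : 1 ≤ p := by omega
  -- |k| ≤ 2^(p-1)
  have h2p : (2:ℤ)^p = 2 * 2^(p-1) := by
    rw [← pow_succ']; congr 1; omega
  have hkabs : |k| ≤ 2^(p-1) := by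
    rw [h2p] at hk1 hk2
    rw [abs_le]
    generalize (2:ℤ)^(p-1) = Q at hk1 hk2
    omega
  -- notation
  set θ : ℝ := -(2*π*(k:ℝ))/2^p with hθ
  set z : ℂ := Complex.exp ((θ:ℝ) * Complex.I) with hz
  set m : ℕ := 2^(p-n-1) with hm
  set a : ℕ := ℓ * 2^(p-n) with ha
  have h2m : 2^(p-n) = 2*m := by
    rw [hm, ← pow_succ']; congr 1; omega
  have hab : a + 2*m ≤ 2^p := by
    rw [ha, ← h2m]
    calc ℓ * 2^(p-n) + 2^(p-n) = (ℓ+1) * 2^(p-n) := by ring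
    _ ≤ 2^n * 2^(p-n) := by exact Nat.mul_le_mul_right _ (by omega)
    _ = 2^p := by rw [← pow_add]; congr 1; omega
  -- conjugate of fourierVec
  have hconj : ∀ t : ℕ, (starRingEnd ℂ) (fourierVec p k t)
      = ((1 / Real.sqrt (2^p) : ℝ) : ℂ) * z^t := by
    intro t
    rw [fourierVec, map_mul, Complex.conj_ofReal, hz, ← Complex.exp_nat_mul,
      ← Complex.exp_conj]
    congr 1
    simp only [map_div₀, map_mul, Complex.conj_I, Complex.conj_ofReal, map_natCast,
      map_intCast, map_pow, map_ofNat]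
    push_cast [hθ]
    ring
  set c2 : ℝ := (2:ℝ) ^ (((n:ℝ) - p)/2) with hc2
  set C : ℝ := (1 / Real.sqrt (2^p)) * c2 with hC
  set G : ℂ := ∑ i ∈ Finset.range m, z^i with hG
  -- rewrite the sum
  have hsum : ∑ t ∈ Finset.range (2^p),
      (starRingEnd ℂ) (fourierVec p k t) * haarBlock p n ℓ 1 t
      = (C:ℂ) * (z^a * (1 - z^m) * G) := by
    have hsub : Finset.Ico a (a + 2*m) ⊆ Finset.range (2^p) := by
      intro t ht
      rw [Finset.mem_Ico] at ht
      rw [Finset.mem_range]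
      omega
    rw [← Finset.sum_subset hsub ?_]
    · rw [← Finset.sum_Ico_consecutive _ (by omega : a ≤ a + m) (by omega : a + m ≤ a + 2*m)]
      have hA : ∑ t ∈ Finset.Ico a (a+m),
          (starRingEnd ℂ) (fourierVec p k t) * haarBlock p n ℓ 1 t
          = (C:ℂ) * (z^a * G) := by
        rw [Finset.sum_Ico_eq_sum_range]
        have : a + m - a = m := by omega
        rw [this, hG, Finset.mul_sum, Finset.mul_sum]
        apply Finset.sum_congr rfl
        intro i hi
        rw [Finset.mem_range] at hi
        rw [hconj, haarBlock, if_pos (by constructor <;> [omega; omega])]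
        push_cast [hC]
        rw [pow_add]
        ring
      have hB : ∑ t ∈ Finset.Ico (a+m) (a+2*m),
          (starRingEnd ℂ) (fourierVec p k t) * haarBlock p n ℓ 1 t
          = -((C:ℂ) * (z^a * z^m * G)) := by
        rw [Finset.sum_Ico_eq_sum_range]
        have : a + 2*m - (a+m) = m := by omega
        rw [this, hG, Finset.mul_sum, Finset.mul_sum, ← Finset.sum_neg_distrib]
        apply Finset.sum_congr rfl
        intro i hi
        rw [Finset.mem_range] at hi
        rw [hconj, haarBlock, if_neg (by omega), if_pos ?_]
        · push_cast [hC]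
          rw [show a + m + i = a + m + i from rfl, pow_add, pow_add]
          ring
        · constructor
          · omega
          · have : (ℓ+1) * 2^(p-n) = a + 2*m := by rw [ha, h2m]; ring
            omega
      rw [hA, hB]
      ring
    · intro t _ htn
      rw [Finset.mem_Ico] at htn
      have hne : haarBlock p n ℓ 1 t = 0 := by
        rw [haarBlock, if_neg ?_, if_neg ?_]
        · have : (ℓ+1) * 2^(p-n) = a + 2*m := by rw [ha, h2m]; ring
          omega
        · omega
      rw [hne, mul_zero]
  -- geometry / analysis part
  have hz1 : ‖z‖ = 1 := Complex.norm_exp_ofReal_mul_I θ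
  set K : ℝ := |(k:ℝ)| with hK
  have hK1 : (1:ℝ) ≤ K := by
    rw [hK, ← Int.cast_abs]
    have h := abs_pos.mpr hk
    have h' : (1:ℤ) ≤ |k| := h
    exact_mod_cast h'
  have hK0 : (0:ℝ) < K := lt_of_lt_of_le one_pos hK1
  set P : ℝ := (2:ℝ)^p with hP
  have hPpos : (0:ℝ) < P := by positivity
  have hKP : K ≤ P/2 := by
    have : ((2:ℝ))^p = 2*2^(p-1) := by exact_mod_cast congrArg (Int.cast : ℤ → ℝ) h2p
    rw [hP, this]
    have : (K:ℝ) ≤ 2^(p-1) := by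
      rw [hK, ← Int.cast_abs]
      exact_mod_cast hkabs
    linarith
  set D : ℝ := ‖z - 1‖ with hD
  set W : ℝ := ‖z^m - 1‖ with hW
  set Gn : ℝ := ‖G‖ with hGn
  have hGnn : 0 ≤ Gn := norm_nonneg _
  have hWnn : 0 ≤ W := norm_nonneg _
  -- |θ/2| = π K / P
  have hth2 : |θ/2| = π * K / P := by
    have h1 : θ/2 = -(π*(k:ℝ))/P := by rw [hθ, hP]; ring
    rw [h1, abs_div, abs_neg, abs_mul, _root_.abs_of_nonneg Real.pi_pos.le,
      _root_.abs_of_pos hPpos, hK]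
  have hth2half : |θ/2| ≤ π/2 := by
    rw [hth2, div_le_div_iff₀ hPpos two_pos]
    have := Real.pi_pos
    nlinarith [hKP]
  -- lower bound on D
  have hsinlow : Real.sin |θ/2| ≤ |Real.sin (θ/2)| := by
    rcases abs_cases (θ/2) with ⟨h, _⟩ | ⟨h, _⟩
    · rw [h]; exact le_abs_self _
    · rw [h, Real.sin_neg]; exact neg_le_abs _
  have hD_low : 4*K/P ≤ D := by
    have h2 : 2/π * |θ/2| ≤ Real.sin |θ/2| :=
      Real.mul_le_sin (abs_nonneg _) hth2half
    rw [hD, hz, abs_exp_I_sub_one]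
    have hpi := Real.pi_pos
    have heq : 2/π * (π*K/P) = 2*K/P := by field_simp
    rw [hth2] at h2 hsinlow
    calc 4*K/P = 2*(2*K/P) := by ring
    _ ≤ 2 * |Real.sin (θ/2)| := by linarith

  have hD_pos : 0 < D := lt_of_lt_of_le (by positivity) hD_low
  -- upper bound on D
  have hD_up : D ≤ 2*π*K/P := by
    rw [hD, hz, abs_exp_I_sub_one]
    have h3 : |Real.sin (θ/2)| ≤ |θ/2| := Real.abs_sin_le_abs
    rw [hth2] at h3
    calc 2 * |Real.sin (θ/2)| ≤ 2*(π*K/P) := by linarith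
    _ = 2*π*K/P := by ring
  -- W, Gn facts
  have hWD : Gn * D = W := by
    rw [hGn, hD, hW, ← norm_mul, geom_sum_mul]
  have hGm : Gn ≤ (m:ℝ) := by
    rw [hGn, hG]
    calc ‖∑ i ∈ Finset.range m, z^i‖ ≤ ∑ i ∈ Finset.range m, ‖z^i‖ :=
          norm_sum_le _ _
    _ = (m:ℝ) := by simp [norm_pow, hz1]
  have hW2 : W ≤ 2 := by
    calc W ≤ ‖z^m‖ + ‖(-1 : ℂ)‖ := by
          rw [hW]
          simpa [sub_eq_add_neg] using norm_add_le (z^m) (-1 : ℂ)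
    _ = 2 := by rw [norm_pow, hz1, one_pow, norm_neg, norm_one]; norm_num
  -- value of C
  set T : ℝ := (2:ℝ)^((n:ℝ)/2) with hT
  have hTpos : 0 < T := Real.rpow_pos_of_pos two_pos _
  have hT2 : T*T = 2^n := by
    rw [hT, ← Real.rpow_add two_pos, ← Real.rpow_natCast 2 n]
    congr 1
    ring
  have hsq : Real.sqrt ((2:ℝ)^p) = (2:ℝ)^((p:ℝ)/2) := by
    rw [← Real.rpow_natCast 2 p, Real.sqrt_eq_rpow, ← Real.rpow_mul (by norm_num)]
    congr 1
    ring
  have hCval : C = T / P := by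
    rw [hC, hc2, hT]
    have h7 : Real.sqrt P = (2:ℝ)^((p:ℝ)/2) := hsq
    rw [h7, hP, ← Real.rpow_natCast 2 p]
    rw [div_mul_eq_mul_div, one_mul, div_eq_div_iff (by positivity) (by positivity)]
    rw [← Real.rpow_add two_pos, ← Real.rpow_add two_pos]
    congr 1
    ring
  have hCpos : 0 < C := by rw [hCval]; positivity
  have hmP : (m:ℝ) * 2 * (T*T) = P := by
    have hnat : m * 2 * 2^n = 2^p := by
      rw [hm, ← pow_succ, ← pow_add]
      congr 1
      omega
    rw [hT2, hP]
    exact_mod_cast hnat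
  have hM1 : (1:ℝ) ≤ (m:ℝ) := by
    exact_mod_cast Nat.one_le_two_pow
  -- rewrite goal
  rw [hsum, norm_mul, norm_mul, norm_mul, Complex.norm_real, Real.norm_eq_abs, norm_pow, hz1, one_pow, one_mul,
    abs_of_pos hCpos]
  have h1m : ‖1 - z^m‖ = W := by
    rw [show (1:ℂ) - z^m = -(z^m - 1) by ring, norm_neg, hW]
  rw [h1m, ← hGn]
  set sK : ℝ := Real.sqrt |(k:ℝ)| with hsK
  have hsKpos : 0 < sK := Real.sqrt_pos.2 hK0
  have hsKsq : sK * sK = K := Real.mul_self_sqrt (abs_nonneg _)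
  clear_value sK C D W Gn T K P
  rw [le_div_iff₀ hsKpos]
  have hsqrt2pi : 2 ≤ Real.sqrt (2*π) := by
    have h4 : (4:ℝ) ≤ 2*π := by linarith [Real.pi_gt_three]
    have := Real.sqrt_le_sqrt h4
    rwa [show (4:ℝ) = 2^2 by norm_num, Real.sqrt_sq (by norm_num : (0:ℝ) ≤ 2)] at this
  have hpi4 : π ≤ 4 := Real.pi_le_four
  by_cases hcase : K ≤ T*T
  · -- small K
    have hsKT : sK ≤ T := by
      have h8 : sK ≤ Real.sqrt (T*T) := by rw [hsK, ← hK]; exact Real.sqrt_le_sqrt hcase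
      rwa [Real.sqrt_mul_self hTpos.le] at h8
    have hWle : W ≤ (m:ℝ) * D := by
      rw [← hWD]; exact mul_le_mul_of_nonneg_right hGm hD_pos.le
    have hbound : W * Gn ≤ (m:ℝ)^2 * (2*π*K/P) := by
      calc W * Gn ≤ ((m:ℝ)*D) * (m:ℝ) := mul_le_mul hWle hGm hGnn (by positivity)
      _ = (m:ℝ)^2 * D := by ring
      _ ≤ (m:ℝ)^2 * (2*π*K/P) := mul_le_mul_of_nonneg_left hD_up (sq_nonneg (m:ℝ))
    calc C * (W * Gn) * sK ≤ C * ((m:ℝ)^2 * (2*π*K/P)) * sK := by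
          apply mul_le_mul_of_nonneg_right _ hsKpos.le
          exact mul_le_mul_of_nonneg_left hbound hCpos.le
    _ = π*K*sK/(2*T^3) := by
          rw [hCval, ← hmP]
          have hm0 : (m:ℝ) ≠ 0 := by linarith
          have hT0 : T ≠ 0 := ne_of_gt hTpos
          field_simp
    _ ≤ 3 * Real.sqrt (2*π) := by
          rw [div_le_iff₀ (by positivity)]
          have hKsK : K * sK ≤ T^3 := by
            have h9 := mul_le_mul hcase hsKT hsKpos.le (mul_nonneg hTpos.le hTpos.le)
            calc K * sK ≤ T*T*T := h9
            _ = T^3 := by ring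
          have h5 : π*(K*sK) ≤ 4*T^3 := by
            calc π*(K*sK) ≤ 4*(K*sK) :=
                  mul_le_mul_of_nonneg_right hpi4 (mul_nonneg hK0.le hsKpos.le)
            _ ≤ 4*T^3 := by linarith
          have h10 : 2*(6*T^3) ≤ Real.sqrt (2*π) * (6*T^3) :=
            mul_le_mul_of_nonneg_right hsqrt2pi (by positivity)
          calc π*K*sK = π*(K*sK) := by ring
          _ ≤ 4*T^3 := h5
          _ ≤ 2*(6*T^3) := by linarith [pow_pos hTpos 3]
          _ ≤ Real.sqrt (2*π) * (6*T^3) := h10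
          _ = 3*Real.sqrt (2*π) * (2*T^3) := by ring
  · -- large K
    push_neg at hcase
    have hTsK : T ≤ sK := by
      have h8 : Real.sqrt (T*T) ≤ sK := by rw [hsK, ← hK]; exact Real.sqrt_le_sqrt hcase.le
      rwa [Real.sqrt_mul_self hTpos.le] at h8
    have hbound : W * Gn ≤ P/K := by
      have e1 : W * Gn = W * W / D := by
        rw [← hWD]
        field_simp
      rw [e1, div_le_div_iff₀ hD_pos hK0]
      have hPD : 4*K ≤ P*D := by
        have h6 : P * (4*K/P) ≤ P * D := mul_le_mul_of_nonneg_left hD_low hPpos.le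
        calc 4*K = P*(4*K/P) := by field_simp
        _ ≤ P*D := h6
      have hWW : W*W ≤ 4 := by nlinarith [hWnn, hW2]
      have := mul_le_mul_of_nonneg_right hWW hK0.le
      linarith
    calc C * (W * Gn) * sK ≤ (T/P) * (P/K) * sK := by
          rw [hCval]
          apply mul_le_mul_of_nonneg_right _ hsKpos.le
          exact mul_le_mul_of_nonneg_left hbound (by positivity)
    _ = T * sK / K := by field_simp
    _ ≤ 1 := by
          rw [div_le_one hK0]
          have := mul_le_mul_of_nonneg_right hTsK hsKpos.le
          rw [hsKsq] at this
          linarith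
    _ ≤ 3 * Real.sqrt (2*π) := by linarith
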